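/- Let n ≥ k ≥ 1 and let μ = (μ_1 ≥ … ≥ μ_k ≥ 0) be a partition into k nonnegative parts. Then ∑ q^{|λ|}, summed over all truncated anti-lecture hall compositions λ ∈ A_{n,k} with ⌊λ⌋ = μ (where ⌊λ⌋ = (⌊λ_1/(n−k+1)⌋,…,⌊λ_k/n⌋)), equals [n choose k]_q · q^{(n−k)|μ|} · A_μ(q), an identity of polynomials in q, where A_μ(q) = ∑ q^{|ν|} summed over all ν ∈ A_k with (⌊ν_1/1⌋,…,⌊ν_k/k⌋) = μ, and [n choose k]_q is the Gaussian polynomial. -/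

import Mathlib

open Finset

noncomputable section
namespace TALH

abbrev F := RatFunc ℚ
abbrev q : F := RatFunc.X

lemma one_sub_q_pow_ne_zero {m : ℕ} (hm : 1 ≤ m) : (1 - q ^ m : F) ≠ 0 := by
  rw [sub_ne_zero]
  intro h
  have hX : (q : F) ^ m = algebraMap (Polynomial ℚ) F (Polynomial.X ^ m) := by
    rw [map_pow, RatFunc.algebraMap_X]
  rw [hX, ← map_one (algebraMap (Polynomial ℚ) F)] at h
  have := IsFractionRing.injective (Polynomial ℚ) F h.symm
  have h0 : (Polynomial.X ^ m : Polynomial ℚ).coeff 0 = 0 := by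
    have hm' : ¬ (0 = m) := by omega
    simp [Polynomial.coeff_X_pow, hm']
  rw [this] at h0
  simp at h0

/-- chain position -/
def cp (c : ℕ → Bool) : ℕ → ℕ
  | 0 => 0
  | j + 1 => if c j then cp c j + 1 else 0

/-- in first chain -/
def inf1 (c : ℕ → Bool) : ℕ → Bool
  | 0 => true
  | j + 1 => inf1 c j && c j

/-- length of initial run (capped) -/
def run : ℕ → (ℕ → Bool) → ℕ
  | 0, _ => 0
  | k + 1, c => if c 0 then run k (fun j => c (j + 1)) + 1 else 1

def Tfun : ℕ → ℕ → ℕ → (ℕ → Bool) → F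
  | _, _, 0, _ => 1
  | b, D, k + 1, c =>
      ∑ v ∈ range b, q ^ v * Tfun (if c 0 then v + 1 else D + 2) (D + 1) k (fun j => c (j + 1))


lemma inf1_succ (c : ℕ → Bool) (j : ℕ) : inf1 c (j + 1) = (inf1 c j && c j) := rfl

lemma cp_succ (c : ℕ → Bool) (j : ℕ) : cp c (j + 1) = if c j then cp c j + 1 else 0 := rfl

lemma inf1_succ_of_c0 {c : ℕ → Bool} (hc : c 0 = true) :
    ∀ j, inf1 c (j + 1) = inf1 (fun i => c (i + 1)) j := by
  intro j; induction j with
  | zero => simp [inf1_succ, inf1, hc]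
  | succ j ih => rw [inf1_succ, ih, inf1_succ]

lemma inf1_succ_of_nc0 {c : ℕ → Bool} (hc : c 0 = false) :
    ∀ j, inf1 c (j + 1) = false := by
  intro j; induction j with
  | zero => simp [inf1_succ, inf1, hc]
  | succ j ih => rw [inf1_succ, ih]; simp

lemma cp_succ_of_nc0 {c : ℕ → Bool} (hc : c 0 = false) :
    ∀ j, cp c (j + 1) = cp (fun i => c (i + 1)) j := by
  intro j; induction j with
  | zero => simp [cp_succ, cp, hc]
  | succ j ih => rw [cp_succ, ih, cp_succ]

lemma cp_succ_of_c0 {c : ℕ → Bool} (hc : c 0 = true) :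
    ∀ j, cp c (j + 1) = cp (fun i => c (i + 1)) j + (if inf1 (fun i => c (i + 1)) j then 1 else 0) := by
  intro j; induction j with
  | zero => simp [cp_succ, cp, hc, inf1]
  | succ j ih =>
    rw [cp_succ, ih, cp_succ, inf1_succ]
    by_cases h : c (j + 1) = true
    · rw [if_pos h, if_pos (show (fun i => c (i+1)) j = true from h), h]
      by_cases h2 : inf1 (fun i => c (i + 1)) j = true
      · simp [h2]
      · simp only [Bool.not_eq_true] at h2; simp [h2]
    · simp only [Bool.not_eq_true] at h
      simp [h]

lemma run_le : ∀ (k : ℕ) (c : ℕ → Bool), run k c ≤ k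
  | 0, _ => le_refl 0
  | k + 1, c => by
      rw [run]
      split
      · exact Nat.succ_le_succ (run_le k _)
      · omega

lemma run_pos : ∀ (k : ℕ) (c : ℕ → Bool), 1 ≤ k → 1 ≤ run k c
  | 0, _, h => by omega
  | k + 1, c, _ => by rw [run]; split <;> omega

lemma inf1_of_lt_run : ∀ (k : ℕ) (c : ℕ → Bool) (j : ℕ), j < run k c → inf1 c j = true
  | 0, _, j, h => by simp [run] at h
  | k + 1, c, j, h => by
      rw [run] at h
      cases j with
      | zero => rfl
      | succ j =>
        by_cases hc : c 0 = true
        · rw [if_pos hc] at h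
          rw [inf1_succ_of_c0 hc]
          exact inf1_of_lt_run k _ j (by omega)
        · rw [if_neg hc] at h; omega

lemma inf1_of_run_le : ∀ (k : ℕ) (c : ℕ → Bool) (j : ℕ), run k c ≤ j → j < k → inf1 c j = false
  | 0, _, j, h1, h2 => by omega
  | k + 1, c, j, h1, h2 => by
      rw [run] at h1
      cases j with
      | zero =>
        exfalso
        by_cases hc : c 0 = true
        · rw [if_pos hc] at h1; omega
        · rw [if_neg hc] at h1; omega
      | succ j =>
        by_cases hc : c 0 = true
        · rw [if_pos hc] at h1
          rw [inf1_succ_of_c0 hc]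
          exact inf1_of_run_le k _ j (by omega) (by omega)
        · simp only [Bool.not_eq_true] at hc
          exact inf1_succ_of_nc0 hc j

lemma cp_of_inf1 {c : ℕ → Bool} : ∀ j, inf1 c j = true → cp c j = j := by
  intro j; induction j with
  | zero => intro _; rfl
  | succ j ih =>
    intro h
    rw [inf1_succ, Bool.and_eq_true] at h
    rw [cp_succ, if_pos h.2, ih h.1]

/-- Key q-identity. -/
lemma keyID (m : ℕ) : ∀ b : ℕ,
    (1 - q ^ (m + 1)) * ∑ v ∈ range b, q ^ v * ∏ j ∈ range m, (1 - q ^ (v + 1 + j)) =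
      ∏ j ∈ range (m + 1), (1 - q ^ (b + j)) := by
  intro b; induction b with
  | zero =>
    rw [prod_range_succ']
    simp
  | succ b ih =>
    rw [sum_range_succ, mul_add, ih]
    have hR : ∏ j ∈ range (m + 1), (1 - q ^ (b + 1 + j)) =
        (∏ j ∈ range m, (1 - q ^ (b + 1 + j))) * (1 - q ^ (b + 1 + m)) := prod_range_succ _ _
    have hL : ∏ j ∈ range (m + 1), (1 - q ^ (b + j)) =
        (∏ j ∈ range m, (1 - q ^ (b + 1 + j))) * (1 - q ^ b) := by
      rw [prod_range_succ']
      congr 1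
      apply prod_congr rfl; intro j _
      have : b + (j + 1) = b + 1 + j := by omega
      rw [this]
    rw [hR, hL]
    ring


lemma prod_one_sub_ne_zero (s : Finset ℕ) (f : ℕ → ℕ) (hf : ∀ j ∈ s, 1 ≤ f j) :
    (∏ j ∈ s, (1 - q ^ f j)) ≠ 0 :=
  prod_ne_zero_iff.mpr fun j hj => one_sub_q_pow_ne_zero (hf j hj)

lemma Tform : ∀ (k : ℕ) (c : ℕ → Bool) (b D : ℕ), 1 ≤ b → b ≤ D + 1 →
    Tfun b D k c * ∏ j ∈ range k, (1 - q ^ (cp c j + 1)) =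
      (∏ j ∈ range (run k c), (1 - q ^ (b + j))) *
        ∏ j ∈ Ico (run k c) k, (1 - q ^ (D + j + 1))
  | 0, c, b, D, hb1, hb2 => by simp [Tfun, run]
  | k + 1, c, b, D, hb1, hb2 => by
    set c' : ℕ → Bool := fun j => c (j + 1) with hc'
    set m' := run k c' with hm'
    have hm'k : m' ≤ k := run_le k c'
    have hsplit : ∏ j ∈ range (k + 1), (1 - q ^ (cp c j + 1)) =
        (∏ j ∈ range k, (1 - q ^ (cp c (j + 1) + 1))) * (1 - q ^ (0 + 1)) := by
      rw [prod_range_succ']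
      simp [cp]
    by_cases hc : c 0 = true
    · -- linked case
      have hrun : run (k + 1) c = m' + 1 := by rw [run, if_pos hc]
      set A := ∏ j ∈ Ico m' k, (1 - q ^ (cp c' j + 1)) with hA
      set Pd1 := ∏ j ∈ range m', (1 - q ^ (j + 1)) with hPd1
      set Pd2 := ∏ j ∈ range m', (1 - q ^ (j + 1 + 1)) with hPd2
      set B' := ∏ j ∈ Ico m' k, (1 - q ^ (D + 1 + j + 1)) with hB'
      have hDen' : ∏ j ∈ range k, (1 - q ^ (cp c (j + 1) + 1)) = Pd2 * A := by
        rw [← prod_range_mul_prod_Ico _ hm'k]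
        congr 1
        · apply prod_congr rfl; intro j hj
          rw [mem_range] at hj
          have h1 : inf1 c' j = true := inf1_of_lt_run k c' j (by omega)
          rw [cp_succ_of_c0 hc j, if_pos h1, cp_of_inf1 j h1]
        · apply prod_congr rfl; intro j hj
          rw [mem_Ico] at hj
          have h1 : inf1 c' j = false := inf1_of_run_le k c' j hj.1 hj.2
          rw [cp_succ_of_c0 hc j, if_neg (by simp [h1]; exact h1), add_zero]
      have hDen'' : ∏ j ∈ range k, (1 - q ^ (cp c' j + 1)) = Pd1 * A := by
        rw [← prod_range_mul_prod_Ico _ hm'k]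
        congr 1
        apply prod_congr rfl; intro j hj
        rw [mem_range] at hj
        rw [cp_of_inf1 j (inf1_of_lt_run k c' j (by omega))]
      have hPd1A : Pd1 * A ≠ 0 := by
        apply mul_ne_zero
        · exact prod_one_sub_ne_zero _ _ (fun j _ => by omega)
        · exact prod_one_sub_ne_zero _ _ (fun j _ => by omega)
      apply mul_right_cancel₀ hPd1A
      have hTfun : Tfun b D (k + 1) c =
          ∑ v ∈ range b, q ^ v * Tfun (v + 1) (D + 1) k c' := by
        rw [Tfun]
        apply sum_congr rfl; intro v _
        rw [if_pos hc]
      have expand : (∑ v ∈ range b, q ^ v * Tfun (v + 1) (D + 1) k c') * (Pd1 * A) =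
          (∑ v ∈ range b, q ^ v * ∏ j ∈ range m', (1 - q ^ (v + 1 + j))) * B' := by
        rw [sum_mul, sum_mul]
        apply sum_congr rfl; intro v hv
        rw [mem_range] at hv
        have := Tform k c' (v + 1) (D + 1) (by omega) (by omega)
        rw [hDen''] at this
        rw [mul_assoc, this, ← hm']
        ring
      have hTel : (1 - q ^ (0 + 1)) * Pd2 = Pd1 * (1 - q ^ (m' + 1)) := by
        have h1 : ∏ j ∈ range (m' + 1), (1 - q ^ (j + 1)) = Pd2 * (1 - q ^ (0 + 1)) := by
          rw [prod_range_succ']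
        have h2 : ∏ j ∈ range (m' + 1), (1 - q ^ (j + 1)) = Pd1 * (1 - q ^ (m' + 1)) := by
          rw [prod_range_succ]
        rw [← h2, h1]; ring
      have hB : ∏ j ∈ Ico (m' + 1) (k + 1), (1 - q ^ (D + j + 1)) = B' := by
        rw [hB', prod_Ico_eq_prod_range, prod_Ico_eq_prod_range]
        have hk : k + 1 - (m' + 1) = k - m' := by omega
        rw [hk]
        apply prod_congr rfl; intro j _
        have : D + (m' + 1 + j) + 1 = D + 1 + (m' + j) + 1 := by omega
        rw [this]
      rw [hTfun, hsplit, hDen', hrun, hB, ← keyID m' b]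
      have final : (∑ v ∈ range b, q ^ v * Tfun (v + 1) (D + 1) k c') * (Pd2 * A * (1 - q ^ (0 + 1))) * (Pd1 * A) =
          ((∑ v ∈ range b, q ^ v * Tfun (v + 1) (D + 1) k c') * (Pd1 * A)) * (Pd2 * (1 - q ^ (0 + 1))) * A := by
        ring
      rw [final, expand]
      linear_combination ((∑ v ∈ range b, q ^ v * ∏ j ∈ range m', (1 - q ^ (v + 1 + j))) * B' * A) * hTel
    · -- unlinked case
      have hcf : c 0 = false := by simpa using hc
      have hrun : run (k + 1) c = 1 := by rw [run, if_neg (by simp [hcf])]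
      have hTfun : Tfun b D (k + 1) c =
          (∑ v ∈ range b, q ^ v) * Tfun (D + 2) (D + 1) k c' := by
        rw [Tfun, sum_mul]
        apply sum_congr rfl; intro v _
        rw [if_neg (by simp [hcf])]
      have hDen' : ∏ j ∈ range k, (1 - q ^ (cp c (j + 1) + 1)) =
          ∏ j ∈ range k, (1 - q ^ (cp c' j + 1)) := by
        apply prod_congr rfl; intro j _
        rw [cp_succ_of_nc0 hcf j]
      have hIH := Tform k c' (D + 2) (D + 1) (by omega) (by omega)
      have hmerge : (∏ j ∈ range (run k c'), (1 - q ^ (D + 2 + j))) *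
          ∏ j ∈ Ico (run k c') k, (1 - q ^ (D + 1 + j + 1)) =
          ∏ j ∈ range k, (1 - q ^ (D + j + 2)) := by
        rw [← prod_range_mul_prod_Ico (fun j => (1 - q ^ (D + j + 2))) (run_le k c')]
        congr 1
        · apply prod_congr rfl; intro j _
          have : D + 2 + j = D + j + 2 := by omega
          rw [this]
        · apply prod_congr rfl; intro j _
          have : D + 1 + j + 1 = D + j + 2 := by omega
          rw [this]
      have hgeom : (∑ v ∈ range b, q ^ v) * (1 - q ^ (0 + 1)) = 1 - q ^ b := by
        have := keyID 0 b
        simp only [range_zero, prod_empty, mul_one, range_one, prod_range_succ, prod_range_zero, one_mul] at this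
        rw [mul_comm]
        simpa using this
      have hIco : ∏ j ∈ Ico 1 (k + 1), (1 - q ^ (D + j + 1)) =
          ∏ j ∈ range k, (1 - q ^ (D + j + 2)) := by
        rw [prod_Ico_eq_prod_range]
        have hk : k + 1 - 1 = k := by omega
        rw [hk]
        apply prod_congr rfl; intro j _
        have : D + (1 + j) + 1 = D + j + 2 := by omega
        rw [this]
      rw [hTfun, hsplit, hDen', hrun, hIco]
      calc (∑ v ∈ range b, q ^ v) * Tfun (D + 2) (D + 1) k c' *
            ((∏ j ∈ range k, (1 - q ^ (cp c' j + 1))) * (1 - q ^ (0 + 1)))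
          = ((∑ v ∈ range b, q ^ v) * (1 - q ^ (0 + 1))) *
            (Tfun (D + 2) (D + 1) k c' * ∏ j ∈ range k, (1 - q ^ (cp c' j + 1))) := by ring
        _ = (1 - q ^ b) * (∏ j ∈ range k, (1 - q ^ (D + j + 2))) := by rw [hgeom, hIH, hmerge]
        _ = (∏ j ∈ range 1, (1 - q ^ (b + j))) * ∏ j ∈ range k, (1 - q ^ (D + j + 2)) := by
            rw [prod_range_one, add_zero]


def bnd (b D j : ℕ) : ℕ := if j = 0 then b else D + j + 1

def SS (b D k : ℕ) (c : ℕ → Bool) : Finset (Fin k → ℕ) :=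
  @Finset.filter _
    (fun r => ∀ (j : ℕ) (h : j + 1 < k), c j = true → r ⟨j + 1, h⟩ ≤ r ⟨j, Nat.lt_of_succ_lt h⟩)
    (Classical.decPred _)
    (Fintype.piFinset fun j => Finset.range (bnd b D (j : ℕ)))

lemma mem_SS {b D k : ℕ} {c : ℕ → Bool} {r : Fin k → ℕ} :
    r ∈ SS b D k c ↔ (∀ j : Fin k, r j < bnd b D (j : ℕ)) ∧
      (∀ (j : ℕ) (h : j + 1 < k), c j = true → r ⟨j + 1, h⟩ ≤ r ⟨j, Nat.lt_of_succ_lt h⟩) := by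
  rw [SS, @Finset.mem_filter _ _ (Classical.decPred _) _ _, Fintype.mem_piFinset]
  simp only [Finset.mem_range]

lemma SS_step (k b D v : ℕ) (c : ℕ → Bool) (hb : b ≤ D + 1) (hv : v < b) :
    ∑ r ∈ (SS b D (k + 1) c).filter (fun r => r ⟨0, Nat.succ_pos k⟩ = v), q ^ (∑ j, r j)
      = ∑ s ∈ SS (if c 0 then v + 1 else D + 2) (D + 1) k (fun j => c (j + 1)),
          q ^ (v + ∑ j, s j) := by
  set bv := if c 0 then v + 1 else D + 2 with hbv
  have hbv2 : bv ≤ D + 2 := by rw [hbv]; split <;> omega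
  refine Finset.sum_bij' (i := fun r _ => fun idx : Fin k => r ⟨(idx : ℕ) + 1, by omega⟩)
    (j := fun s _ => fun idx : Fin (k + 1) =>
      if h : (idx : ℕ) = 0 then v else s ⟨(idx : ℕ) - 1, by omega⟩) ?hi ?hj ?left ?right ?vals
  case hi =>
    intro r hr
    rw [Finset.mem_filter] at hr
    obtain ⟨hr, hr0⟩ := hr
    rw [mem_SS] at hr ⊢
    obtain ⟨hr1, hr2⟩ := hr
    constructor
    · intro jj
      show r ⟨(jj : ℕ) + 1, by omega⟩ < bnd bv (D + 1) (jj : ℕ)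
      have hval : ((⟨(jj : ℕ) + 1, by omega⟩ : Fin (k + 1)) : ℕ) = (jj : ℕ) + 1 := rfl
      have h3 : r ⟨(jj : ℕ) + 1, by omega⟩ < bnd b D ((jj : ℕ) + 1) := by
        have := hr1 ⟨(jj : ℕ) + 1, by omega⟩
        rwa [hval] at this
      rw [bnd, if_neg (show ¬((jj : ℕ) + 1 = 0) by omega)] at h3
      by_cases hj0 : (jj : ℕ) = 0
      · rw [bnd, if_pos hj0]
        by_cases hc0 : c 0 = true
        · rw [hbv, if_pos hc0]
          have h01 : (0 : ℕ) + 1 < k + 1 := by omega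
          have h2 := hr2 0 h01 hc0
          have e1 : r ⟨(jj : ℕ) + 1, by omega⟩ = r ⟨0 + 1, h01⟩ :=
            congrArg r (Fin.ext (by simp [hj0]))
          have e2 : r ⟨0, Nat.lt_of_succ_lt h01⟩ = r ⟨0, Nat.succ_pos k⟩ :=
            congrArg r (Fin.ext rfl)
          rw [e2, hr0] at h2
          rw [e1]
          omega
        · rw [hbv, if_neg hc0]
          omega
      · rw [bnd, if_neg hj0]
        omega
    · intro jj hjj hcjj
      show r ⟨jj + 1 + 1, by omega⟩ ≤ r ⟨jj + 1, by omega⟩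
      have h2 : (jj + 1) + 1 < k + 1 := by omega
      have h3 := hr2 (jj + 1) h2 hcjj
      have e1 : r ⟨jj + 1 + 1, h2⟩ = r ⟨jj + 1 + 1, by omega⟩ := congrArg r (Fin.ext rfl)
      have e2 : r ⟨jj + 1, Nat.lt_of_succ_lt h2⟩ = r ⟨jj + 1, by omega⟩ :=
        congrArg r (Fin.ext rfl)
      rw [e1, e2] at h3
      exact h3
  case hj =>
    intro s hs
    rw [mem_SS] at hs
    obtain ⟨hs1, hs2⟩ := hs
    rw [Finset.mem_filter]
    refine ⟨?_, ?_⟩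
    · rw [mem_SS]
      constructor
      · intro jj
        show (if h : (jj : ℕ) = 0 then v else s ⟨(jj : ℕ) - 1, by omega⟩) < bnd b D (jj : ℕ)
        by_cases hj0 : (jj : ℕ) = 0
        · rw [dif_pos hj0, bnd, if_pos hj0]
          exact hv
        · rw [dif_neg hj0, bnd, if_neg hj0]
          have h3 : s ⟨(jj : ℕ) - 1, by omega⟩ < bnd bv (D + 1) ((jj : ℕ) - 1) := by
            have := hs1 ⟨(jj : ℕ) - 1, by omega⟩
            rwa [show ((⟨(jj : ℕ) - 1, by omega⟩ : Fin k) : ℕ) = (jj : ℕ) - 1 from rfl] at this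
          by_cases hj1 : (jj : ℕ) - 1 = 0
          · rw [bnd, if_pos hj1] at h3
            omega
          · rw [bnd, if_neg hj1] at h3
            omega
      · intro jj hjj hcjj
        show (if h : jj + 1 = 0 then v else s ⟨jj + 1 - 1, by omega⟩) ≤
          (if h : jj = 0 then v else s ⟨jj - 1, by omega⟩)
        rw [dif_neg (show ¬(jj + 1 = 0) by omega)]
        by_cases hj0 : jj = 0
        · rw [dif_pos hj0]
          have h3 : s ⟨0, by omega⟩ < bnd bv (D + 1) 0 := by
            have := hs1 ⟨0, by omega⟩
            rwa [show ((⟨0, by omega⟩ : Fin k) : ℕ) = 0 from rfl] at this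
          rw [bnd, if_pos rfl, hbv] at h3
          rw [hj0] at hcjj
          rw [if_pos hcjj] at h3
          have he : s ⟨jj + 1 - 1, by omega⟩ = s ⟨0, by omega⟩ :=
            congrArg s (Fin.ext (by simp [hj0]))
          rw [he]
          omega
        · rw [dif_neg hj0]
          have h2 : (jj - 1) + 1 < k := by omega
          have h3 := hs2 (jj - 1) h2 (by
            have he2 : jj - 1 + 1 = jj := by omega
            rw [he2]; exact hcjj)
          have he3 : s ⟨jj + 1 - 1, by omega⟩ = s ⟨jj - 1 + 1, h2⟩ :=
            congrArg s (Fin.ext (by simp; omega))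
          have he4 : s ⟨jj - 1, Nat.lt_of_succ_lt h2⟩ = s ⟨jj - 1, by omega⟩ :=
            congrArg s (Fin.ext rfl)
          rw [he3, ← he4]
          exact h3
    · show (if h : ((⟨0, Nat.succ_pos k⟩ : Fin (k + 1)) : ℕ) = 0 then v
          else s ⟨((⟨0, Nat.succ_pos k⟩ : Fin (k + 1)) : ℕ) - 1, by omega⟩) = v
      rw [dif_pos rfl]
  case left =>
    intro r hr
    rw [Finset.mem_filter] at hr
    funext idx
    show (if h : (idx : ℕ) = 0 then v else r ⟨(idx : ℕ) - 1 + 1, by omega⟩) = r idx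
    by_cases hj0 : (idx : ℕ) = 0
    · rw [dif_pos hj0, ← hr.2]
      exact (congrArg r (Fin.ext (by simp [hj0]))).symm
    · rw [dif_neg hj0]
      exact congrArg r (Fin.ext (by simp; omega))
  case right =>
    intro s hs
    funext idx
    show (if h : (idx : ℕ) + 1 = 0 then v else s ⟨(idx : ℕ) + 1 - 1, by omega⟩) = s idx
    rw [dif_neg (show ¬((idx : ℕ) + 1 = 0) by omega)]
    exact congrArg s (Fin.ext (by simp))
  case vals =>
    intro r hr
    rw [Finset.mem_filter] at hr
    have h0 : r 0 = v := by
      rw [← hr.2]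
      exact congrArg r (Fin.ext (by simp))
    have hsum : (∑ j, r j) = v + ∑ j : Fin k, r ⟨(j : ℕ) + 1, by omega⟩ := by
      rw [Fin.sum_univ_succ, h0]
      congr 1
    show q ^ (∑ j, r j) = q ^ (v + ∑ j : Fin k, r ⟨(j : ℕ) + 1, by omega⟩)
    rw [hsum]

lemma structEq : ∀ (k : ℕ) (c : ℕ → Bool) (b D : ℕ), b ≤ D + 1 →
    (∑ r ∈ SS b D k c, q ^ (∑ j, r j)) = Tfun b D k c
  | 0, c, b, D, hb => by
    have huniv : SS b D 0 c = Finset.univ := by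
      apply Finset.eq_univ_iff_forall.mpr
      intro r
      rw [mem_SS]
      exact ⟨fun j => j.elim0, fun j h => by omega⟩
    rw [huniv, Tfun, Finset.univ_unique, Finset.sum_singleton]
    simp
  | k + 1, c, b, D, hb => by
    have hmaps : ∀ r ∈ SS b D (k + 1) c, r ⟨0, Nat.succ_pos k⟩ ∈ range b := by
      intro r hr
      rw [mem_SS] at hr
      have h1 := hr.1 ⟨0, Nat.succ_pos k⟩
      rw [bnd, if_pos rfl] at h1
      rw [mem_range]
      exact h1
    rw [← Finset.sum_fiberwise_of_maps_to hmaps (fun r => q ^ (∑ j, r j)), Tfun]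
    apply Finset.sum_congr rfl
    intro v hv
    rw [mem_range] at hv
    rw [SS_step k b D v c hb hv,
      ← structEq k (fun j => c (j + 1)) (if c 0 then v + 1 else D + 2) (D + 1)
        (by split <;> omega),
      Finset.mul_sum]
    apply Finset.sum_congr rfl
    intro s _
    rw [pow_add]


lemma div_eq_iff' (d l m : ℕ) (hd : 0 < d) : l / d = m ↔ d * m ≤ l ∧ l < d * m + d := by
  constructor
  · intro h
    have h1 : m * d ≤ l := (Nat.le_div_iff_mul_le hd).mp (le_of_eq h.symm)
    have h2 : l < (m + 1) * d := (Nat.div_lt_iff_lt_mul hd).mp (by omega)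
    have e1 : d * m = m * d := by ring
    have e2 : (m + 1) * d = m * d + d := by ring
    omega
  · intro ⟨h1, h2⟩
    have h3 : m ≤ l / d := (Nat.le_div_iff_mul_le hd).mpr (by
      have : m * d = d * m := by ring
      omega)
    have h4 : l / d < m + 1 := (Nat.div_lt_iff_lt_mul hd).mpr (by
      have : (m + 1) * d = d * m + d := by ring
      omega)
    omega

lemma step_le {d B A m : ℤ} (hd : 1 ≤ d) (hA : A < d * m + d) (hA0 : 0 ≤ A)
    (key : d * B ≤ (d + 1) * A) : B ≤ A + m := by
  by_contra hcon
  push_neg at hcon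
  have h1 : A + m + 1 ≤ B := hcon
  have h2 : d * (A + m + 1) ≤ d * B := by
    apply mul_le_mul_of_nonneg_left h1 (by omega)
  nlinarith

lemma step_ineq_eq {d m r r' : ℤ} (hd : 1 ≤ d) (hr' : r' ≤ r) (hr0 : 0 ≤ r) :
    d * ((d + 1) * m + r') ≤ (d + 1) * (d * m + r) := by nlinarith

lemma step_ineq_lt {d m m' r r' : ℤ} (hd : 1 ≤ d) (hm : m' + 1 ≤ m) (hr' : r' ≤ d) (hr0 : 0 ≤ r) :
    d * ((d + 1) * m' + r') ≤ (d + 1) * (d * m + r) := by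
  have h1 : d * r' ≤ d * d := mul_le_mul_of_nonneg_left hr' (by omega)
  have h2 : d * (d + 1) * (m' + 1) ≤ d * (d + 1) * m :=
    mul_le_mul_of_nonneg_left hm (by positivity)
  nlinarith


def link (k : ℕ) (μ : Fin k → ℕ) : ℕ → Bool :=
  fun j => if h : j + 1 < k then decide (μ ⟨j, Nat.lt_of_succ_lt h⟩ = μ ⟨j + 1, h⟩) else false

lemma link_iff {k : ℕ} {μ : Fin k → ℕ} {j : ℕ} (h : j + 1 < k) :
    link k μ j = true ↔ μ ⟨j, Nat.lt_of_succ_lt h⟩ = μ ⟨j + 1, h⟩ := by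
  rw [link, dif_pos h, decide_eq_true_iff]

lemma bnd_eq (a j : ℕ) : bnd (a + 1) a j = a + 1 + j := by
  rw [bnd]; split <;> omega

lemma cond_iff (k a : ℕ) (μ : Fin k → ℕ) (hμ : Antitone μ) (l : Fin k → ℕ) :
    ((∀ i : Fin k, ∀ h : (i : ℕ) + 1 < k,
        ((a : ℤ) + (i : ℕ) + 1) * (l ⟨(i : ℕ) + 1, h⟩ : ℤ) ≤
          ((a : ℤ) + (i : ℕ) + 2) * (l i : ℤ)) ∧
      (∀ i : Fin k, l i / (a + 1 + (i : ℕ)) = μ i))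
    ↔ l ∈ (SS (a + 1) a k (link k μ)).image
        (fun r => fun j : Fin k => (a + 1 + (j : ℕ)) * μ j + r j) := by
  constructor
  · rintro ⟨hineq, hdiv⟩
    have hdiv' : ∀ i : Fin k, (a + 1 + (i : ℕ)) * μ i ≤ l i ∧
        l i < (a + 1 + (i : ℕ)) * μ i + (a + 1 + (i : ℕ)) :=
      fun i => (div_eq_iff' _ _ _ (by omega)).mp (hdiv i)
    refine Finset.mem_image.mpr ⟨fun j => l j - (a + 1 + (j : ℕ)) * μ j, ?_, ?_⟩
    · rw [mem_SS]
      constructor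
      · intro j
        rw [bnd_eq]
        have := hdiv' j
        set p := (a + 1 + (j : ℕ)) * μ j with hp
        omega
      · intro j h hc
        -- chain condition
        have hj : j < k := Nat.lt_of_succ_lt h
        have hmeq : μ ⟨j, hj⟩ = μ ⟨j + 1, h⟩ := (link_iff h).mp hc
        have key : ((a : ℤ) + j + 1) * (l ⟨j + 1, h⟩ : ℤ) ≤
            ((a : ℤ) + j + 2) * (l ⟨j, hj⟩ : ℤ) := hineq ⟨j, hj⟩ h
        have hA := hdiv' ⟨j, hj⟩
        have hB := hdiv' ⟨j + 1, h⟩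
        simp only at hA hB
        -- pass to ℤ
        have hAd : (l ⟨j, hj⟩ : ℤ) < ((a : ℤ) + j + 1) * (μ ⟨j, hj⟩ : ℤ) + ((a : ℤ) + j + 1) := by
          have h2 := hA.2
          zify at h2
          linarith
        have key' : ((a : ℤ) + j + 1) * (l ⟨j + 1, h⟩ : ℤ) ≤
            (((a : ℤ) + j + 1) + 1) * (l ⟨j, hj⟩ : ℤ) := by linarith [key]
        have hBle' := step_le (show (1 : ℤ) ≤ (a : ℤ) + j + 1 by omega) hAd
          (by positivity) key'
        have hBle : l ⟨j + 1, h⟩ ≤ l ⟨j, hj⟩ + μ ⟨j, hj⟩ := by exact_mod_cast hBle'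
        show l ⟨j + 1, h⟩ - (a + 1 + (j + 1)) * μ ⟨j + 1, h⟩ ≤
          l ⟨j, hj⟩ - (a + 1 + j) * μ ⟨j, hj⟩
        have hPP : (a + 1 + (j + 1)) * μ ⟨j + 1, h⟩ =
            (a + 1 + j) * μ ⟨j, hj⟩ + μ ⟨j, hj⟩ := by
          rw [← hmeq]; ring
        set pA := (a + 1 + j) * μ ⟨j, hj⟩ with hpA
        omega
    · funext j
      have := (hdiv' j).1
      set p := (a + 1 + (j : ℕ)) * μ j with hp
      show p + (l j - p) = l j
      omega
  · intro hmem
    obtain ⟨r, hr, rfl⟩ := Finset.mem_image.mp hmem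
    rw [mem_SS] at hr
    obtain ⟨hr1, hr2⟩ := hr
    have hrb : ∀ j : Fin k, r j < a + 1 + (j : ℕ) := by
      intro j
      have := hr1 j
      rwa [bnd_eq] at this
    constructor
    · intro i h
      show ((a : ℤ) + (i : ℕ) + 1) * (((a + 1 + ((⟨(i : ℕ) + 1, h⟩ : Fin k) : ℕ)) *
          μ ⟨(i : ℕ) + 1, h⟩ + r ⟨(i : ℕ) + 1, h⟩ : ℕ) : ℤ) ≤
        ((a : ℤ) + (i : ℕ) + 2) * (((a + 1 + (i : ℕ)) * μ i + r i : ℕ) : ℤ)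
      have hji : i = (⟨(i : ℕ), Nat.lt_of_succ_lt h⟩ : Fin k) := Fin.ext rfl
      set j := (i : ℕ) with hjdef
      have hval : ((⟨j + 1, h⟩ : Fin k) : ℕ) = j + 1 := rfl
      rw [hval]
      set m := (μ i : ℤ) with hm
      set m' := (μ ⟨j + 1, h⟩ : ℤ) with hm'
      set rA := (r i : ℤ) with hrA
      set rB := (r ⟨j + 1, h⟩ : ℤ) with hrB
      have hd : (1 : ℤ) ≤ (a : ℤ) + j + 1 := by omega
      have hrA0 : 0 ≤ rA := by positivity
      have hrBd : rB ≤ (a : ℤ) + j + 1 := by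
        have h9 := hrb ⟨j + 1, h⟩
        rw [hval] at h9
        have h10 : (r ⟨j + 1, h⟩ : ℕ) ≤ a + j + 1 := by omega
        rw [hrB]
        exact_mod_cast h10
      have hcast : (((a + 1 + (j + 1)) * μ ⟨j + 1, h⟩ + r ⟨j + 1, h⟩ : ℕ) : ℤ) =
          (((a : ℤ) + j + 1) + 1) * m' + rB := by push_cast; ring
      have hcast2 : (((a + 1 + j) * μ i + r i : ℕ) : ℤ) = ((a : ℤ) + j + 1) * m + rA := by
        push_cast; ring
      rw [hcast, hcast2]
      have goal2 : ((a : ℤ) + j + 1) * ((((a : ℤ) + j + 1) + 1) * m' + rB) ≤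
          (((a : ℤ) + j + 1) + 1) * (((a : ℤ) + j + 1) * m + rA) := by
        by_cases hmeq : μ i = μ ⟨j + 1, h⟩
        · have hcj : link k μ j = true := (link_iff h).mpr (by rw [← hji]; exact hmeq)
          have hrle := hr2 j h hcj
          have hrle' : rB ≤ rA := by
            rw [hrB, hrA, hji]
            exact_mod_cast hrle
          have hmm : m' = m := by rw [hm', hm, hmeq]
          rw [hmm]
          exact step_ineq_eq hd hrle' hrA0
        · have hlt : μ ⟨j + 1, h⟩ < μ i := by
            have hle : μ ⟨j + 1, h⟩ ≤ μ i := by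
              rw [hji]
              exact hμ (by rw [Fin.mk_le_mk]; omega)
            omega
          exact step_ineq_lt hd (by rw [hm, hm']; exact_mod_cast hlt) hrBd hrA0
      calc ((a : ℤ) + j + 1) * ((((a : ℤ) + j + 1) + 1) * m' + rB) ≤
          (((a : ℤ) + j + 1) + 1) * (((a : ℤ) + j + 1) * m + rA) := goal2
        _ = ((a : ℤ) + j + 2) * (((a : ℤ) + j + 1) * m + rA) := by ring
    · intro i
      show ((a + 1 + (i : ℕ)) * μ i + r i) / (a + 1 + (i : ℕ)) = μ i
      rw [div_eq_iff' _ _ _ (by omega)]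
      have := hrb i
      set p := (a + 1 + (i : ℕ)) * μ i with hp
      omega


lemma finsum_subtype_congr {α : Type*} (f : α → F) {p1 p2 : α → Prop}
    (h : ∀ a, p1 a ↔ p2 a) : ∑ᶠ x : Subtype p1, f x = ∑ᶠ x : Subtype p2, f x := by
  have hp : p1 = p2 := funext fun a => propext (h a)
  subst hp
  rfl

lemma finsum_subtype_eq_finset_sum {α : Type*} (f : α → F) (p : α → Prop) (S : Finset α)
    (h : ∀ a, p a ↔ a ∈ S) : ∑ᶠ (x : Subtype p), f x = ∑ a ∈ S, f a := by
  rw [finsum_subtype_eq_finsum_cond]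
  have hp : p = fun a => a ∈ (S : Set α) := funext fun a => propext (by simpa using h a)
  rw [hp]
  exact finsum_mem_coe_finset f S

/-- combined: fiber sum in terms of Tfun -/
lemma fiber_sum (k a : ℕ) (μ : Fin k → ℕ) (hμ : Antitone μ) :
    (∑ᶠ l : {l : Fin k → ℕ //
        (∀ i : Fin k, ∀ h : (i : ℕ) + 1 < k,
          ((a : ℤ) + (i : ℕ) + 1) * (l ⟨(i : ℕ) + 1, h⟩ : ℤ) ≤
            ((a : ℤ) + (i : ℕ) + 2) * (l i : ℤ)) ∧
        (∀ i : Fin k, l i / (a + 1 + (i : ℕ)) = μ i)},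
      q ^ (∑ i, l.1 i)) =
      q ^ (∑ j : Fin k, (a + 1 + (j : ℕ)) * μ j) * Tfun (a + 1) a k (link k μ) := by
  rw [finsum_subtype_eq_finset_sum (fun l => q ^ (∑ i, l i)) _
    ((SS (a + 1) a k (link k μ)).image
      (fun r => fun j : Fin k => (a + 1 + (j : ℕ)) * μ j + r j))
    (fun l => cond_iff k a μ hμ l)]
  rw [Finset.sum_image (by
    intro x _ y _ hxy
    funext j
    have := congrFun hxy j
    simp only at this
    omega)]
  rw [← structEq k (link k μ) (a + 1) a (le_refl _), Finset.mul_sum]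
  apply Finset.sum_congr rfl
  intro r _
  rw [← pow_add]
  congr 1
  rw [← Finset.sum_add_distrib]


end TALH
end

open TALH Finset in
/-- For `n ≥ k ≥ 1` and an antitone `μ : Fin k → ℕ` (a partition into `k`
nonnegative parts), the generating function `∑ q^{|λ|}` over all truncated
anti-lecture hall compositions `λ ∈ A_{n,k}` with
`⌊λ⌋ = (⌊λ₁/(n-k+1)⌋,…,⌊λ_k/n⌋) = μ` equals
`[n choose k]_q · q^{(n-k)|μ|} · A_μ(q)` (an identity stated in the field
`RatFunc ℚ`, `q = RatFunc.X`), where `A_μ(q) = ∑ q^{|ν|}` over all `ν ∈ A_k`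
with `(⌊ν₁/1⌋,…,⌊ν_k/k⌋) = μ`, and `[n choose k]_q = (q^{n-k+1};q)_k/(q;q)_k`
is the Gaussian polynomial. -/
theorem truncated_anti_lecture_hall_fiber (n k : ℕ) (hk : 1 ≤ k) (hkn : k ≤ n)
    (μ : Fin k → ℕ) (hμ : Antitone μ) :
    (∑ᶠ l : {l : Fin k → ℕ //
        (∀ i : Fin k, ∀ h : i.1 + 1 < k,
          ((n : ℤ) - k + i.1 + 1) * (l ⟨i.1 + 1, h⟩ : ℤ) ≤
            ((n : ℤ) - k + i.1 + 2) * (l i : ℤ)) ∧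
        (∀ i : Fin k, l i / (n + 1 - k + i.1) = μ i)},
      (RatFunc.X : RatFunc ℚ) ^ (∑ i, l.1 i)) =
      ((∏ i ∈ Finset.range k, (1 - (RatFunc.X : RatFunc ℚ) ^ (n + 1 - k + i))) /
        (∏ i ∈ Finset.range k, (1 - (RatFunc.X : RatFunc ℚ) ^ (1 + i)))) *
      (RatFunc.X : RatFunc ℚ) ^ ((n - k) * ∑ i, μ i) *
      (∑ᶠ l : {l : Fin k → ℕ //
        (∀ i : Fin k, ∀ h : i.1 + 1 < k,
          ((i.1 : ℤ) + 1) * (l ⟨i.1 + 1, h⟩ : ℤ) ≤ ((i.1 : ℤ) + 2) * (l i : ℤ)) ∧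
        (∀ i : Fin k, l i / (i.1 + 1) = μ i)},
      (RatFunc.X : RatFunc ℚ) ^ (∑ i, l.1 i)) := by
  set c := link k μ with hc
  have hpredL : ∀ l : Fin k → ℕ,
      ((∀ i : Fin k, ∀ h : i.1 + 1 < k,
          ((n : ℤ) - k + i.1 + 1) * (l ⟨i.1 + 1, h⟩ : ℤ) ≤
            ((n : ℤ) - k + i.1 + 2) * (l i : ℤ)) ∧
        (∀ i : Fin k, l i / (n + 1 - k + i.1) = μ i)) ↔
      ((∀ i : Fin k, ∀ h : (i : ℕ) + 1 < k,
          (((n - k : ℕ) : ℤ) + (i : ℕ) + 1) * (l ⟨(i : ℕ) + 1, h⟩ : ℤ) ≤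
            (((n - k : ℕ) : ℤ) + (i : ℕ) + 2) * (l i : ℤ)) ∧
        (∀ i : Fin k, l i / ((n - k) + 1 + (i : ℕ)) = μ i)) := by
    intro l
    have e1 : ∀ x : ℕ, ((n : ℤ) - k + x + 1) = (((n - k : ℕ) : ℤ) + x + 1) := by intro x; omega
    have e2 : ∀ x : ℕ, ((n : ℤ) - k + x + 2) = (((n - k : ℕ) : ℤ) + x + 2) := by intro x; omega
    have e3 : ∀ x : ℕ, n + 1 - k + x = (n - k) + 1 + x := by intro x; omega
    constructor
    · rintro ⟨h1, h2⟩
      exact ⟨fun i h => by rw [← e1, ← e2]; exact h1 i h, fun i => by rw [← e3]; exact h2 i⟩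
    · rintro ⟨h1, h2⟩
      exact ⟨fun i h => by rw [e1, e2]; exact h1 i h, fun i => by rw [e3]; exact h2 i⟩
  have hpredR : ∀ l : Fin k → ℕ,
      ((∀ i : Fin k, ∀ h : i.1 + 1 < k,
          ((i.1 : ℤ) + 1) * (l ⟨i.1 + 1, h⟩ : ℤ) ≤ ((i.1 : ℤ) + 2) * (l i : ℤ)) ∧
        (∀ i : Fin k, l i / (i.1 + 1) = μ i)) ↔
      ((∀ i : Fin k, ∀ h : (i : ℕ) + 1 < k,
          (((0 : ℕ) : ℤ) + (i : ℕ) + 1) * (l ⟨(i : ℕ) + 1, h⟩ : ℤ) ≤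
            (((0 : ℕ) : ℤ) + (i : ℕ) + 2) * (l i : ℤ)) ∧
        (∀ i : Fin k, l i / (0 + 1 + (i : ℕ)) = μ i)) := by
    intro l
    have e1 : ∀ x : ℕ, (((0 : ℕ) : ℤ) + x + 1) = ((x : ℤ) + 1) := by intro x; omega
    have e2 : ∀ x : ℕ, (((0 : ℕ) : ℤ) + x + 2) = ((x : ℤ) + 2) := by intro x; omega
    have e3 : ∀ x : ℕ, 0 + 1 + x = x + 1 := by intro x; omega
    constructor
    · rintro ⟨h1, h2⟩
      exact ⟨fun i h => by rw [e1, e2]; exact h1 i h, fun i => by rw [e3]; exact h2 i⟩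
    · rintro ⟨h1, h2⟩
      exact ⟨fun i h => by rw [← e1, ← e2]; exact h1 i h, fun i => by rw [← e3]; exact h2 i⟩
  have hLfull : (∑ᶠ l : {l : Fin k → ℕ //
        (∀ i : Fin k, ∀ h : i.1 + 1 < k,
          ((n : ℤ) - k + i.1 + 1) * (l ⟨i.1 + 1, h⟩ : ℤ) ≤
            ((n : ℤ) - k + i.1 + 2) * (l i : ℤ)) ∧
        (∀ i : Fin k, l i / (n + 1 - k + i.1) = μ i)},
      (RatFunc.X : RatFunc ℚ) ^ (∑ i, l.1 i)) =
      q ^ (∑ j : Fin k, ((n - k) + 1 + (j : ℕ)) * μ j) * Tfun ((n - k) + 1) (n - k) k c :=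
    (finsum_subtype_congr (fun a : Fin k → ℕ => (RatFunc.X : RatFunc ℚ) ^ (∑ i, a i))
      hpredL).trans (fiber_sum k (n - k) μ hμ)
  have hRfull : (∑ᶠ l : {l : Fin k → ℕ //
        (∀ i : Fin k, ∀ h : i.1 + 1 < k,
          ((i.1 : ℤ) + 1) * (l ⟨i.1 + 1, h⟩ : ℤ) ≤ ((i.1 : ℤ) + 2) * (l i : ℤ)) ∧
        (∀ i : Fin k, l i / (i.1 + 1) = μ i)},
      (RatFunc.X : RatFunc ℚ) ^ (∑ i, l.1 i)) =
      q ^ (∑ j : Fin k, (0 + 1 + (j : ℕ)) * μ j) * Tfun (0 + 1) 0 k c :=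
    (finsum_subtype_congr (fun a : Fin k → ℕ => (RatFunc.X : RatFunc ℚ) ^ (∑ i, a i))
      hpredR).trans (fiber_sum k 0 μ hμ)
  rw [hLfull, hRfull]
  -- closed forms
  set Pden := ∏ j ∈ range k, (1 - q ^ (cp c j + 1)) with hPden
  have hPdenNe : Pden ≠ 0 := prod_one_sub_ne_zero _ _ (fun j _ => by omega)
  have hT : ∀ a : ℕ, Tfun (a + 1) a k c * Pden = ∏ j ∈ range k, (1 - q ^ (a + j + 1)) := by
    intro a
    rw [Tform k c (a + 1) a (by omega) (le_refl _)]
    rw [← prod_range_mul_prod_Ico (fun j => 1 - q ^ (a + j + 1)) (run_le k c)]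
    congr 1
    apply prod_congr rfl
    intro j _
    have : a + 1 + j = a + j + 1 := by omega
    rw [this]
  have hGauss : ∏ i ∈ Finset.range k, (1 - (RatFunc.X : RatFunc ℚ) ^ (n + 1 - k + i)) =
      ∏ j ∈ range k, (1 - q ^ ((n - k) + j + 1)) := by
    apply prod_congr rfl
    intro i _
    have : n + 1 - k + i = (n - k) + i + 1 := by omega
    rw [this]
  have hP1 : ∏ i ∈ Finset.range k, (1 - (RatFunc.X : RatFunc ℚ) ^ (1 + i)) =
      ∏ j ∈ range k, (1 - q ^ (0 + j + 1)) := by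
    apply prod_congr rfl
    intro i _
    have : (1 : ℕ) + i = 0 + i + 1 := by omega
    rw [this]
  have hP1Ne : (∏ j ∈ range k, (1 - q ^ (0 + j + 1))) ≠ 0 :=
    prod_one_sub_ne_zero _ _ (fun j _ => by omega)
  have hW : (∑ j : Fin k, ((n - k) + 1 + (j : ℕ)) * μ j) =
      (n - k) * (∑ i, μ i) + ∑ j : Fin k, (0 + 1 + (j : ℕ)) * μ j := by
    rw [Finset.mul_sum, ← Finset.sum_add_distrib]
    apply Finset.sum_congr rfl
    intro j _
    ring
  have e1' : Tfun ((n - k) + 1) (n - k) k c =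
      (∏ j ∈ range k, (1 - q ^ ((n - k) + j + 1))) / Pden := by
    rw [eq_div_iff hPdenNe]; exact hT (n - k)
  have e2' : Tfun (0 + 1) 0 k c = (∏ j ∈ range k, (1 - q ^ (0 + j + 1))) / Pden := by
    rw [eq_div_iff hPdenNe]; exact hT 0
  rw [hGauss, hP1, hW, pow_add, e1', e2']
  have hz : ∀ x : ℕ, (0:ℕ) + x + 1 = x + 1 := by intro x; omega
  simp only [hz]
  simp only [hz] at hP1Ne
  field_simp
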